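/- Let $T, F \subseteq \{0,1\}^n$ satisfy: $\mathbf{u} \not\leq \overline{\mathbf{u}'}$ for all $\mathbf{u},\mathbf{u}' \in T$; $\overline{\mathbf{v}} \not\leq \mathbf{v}'$ for all $\mathbf{v},\mathbf{v}' \in F$; and $\mathbf{u} \not\leq \mathbf{v}$ for all $\mathbf{u} \in T$, $\mathbf{v} \in F$. Then there exists an upset $U$ of $\{0,1\}^n$ with $|U| = 2^{n-1}$ such that $T \subseteq U$, $F \subseteq \overline{U}$, and $U \cap \overline{U} = \emptyset$. -/

import Mathlib

section Aux

variable {n : ℕ}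

private lemma bool_le_true {a b : Bool} (h : a ≤ b) (ha : a = true) : b = true := by
  subst ha; cases b
  · exact absurd h (by decide)
  · rfl

private def bneg (x : Fin n → Bool) : Fin n → Bool := fun i => ! x i

private lemma bneg_bneg (x : Fin n → Bool) : bneg (bneg x) = x := by
  funext i; simp [bneg]

private lemma bneg_anti {x y : Fin n → Bool} (h : x ≤ y) : bneg y ≤ bneg x := by
  intro i
  have := h i
  revert this
  simp only [bneg]
  cases x i <;> cases y i <;> simp

private lemma le_bneg_comm {x y : Fin n → Bool} : x ≤ bneg y ↔ y ≤ bneg x := by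
  constructor <;> intro h i <;> have := h i <;> revert this <;>
    simp only [bneg] <;> cases x i <;> cases y i <;> simp

private def wt (x : Fin n → Bool) : ℕ := (Finset.univ.filter (fun i => x i = true)).card

private lemma filter_sub {x y : Fin n → Bool} (h : x ≤ y) :
    (Finset.univ.filter (fun i => x i = true)) ⊆
      (Finset.univ.filter (fun i => y i = true)) := by
  intro i hi
  simp only [Finset.mem_filter, Finset.mem_univ, true_and] at hi ⊢
  exact bool_le_true (h i) hi

private lemma wt_mono {x y : Fin n → Bool} (h : x ≤ y) : wt x ≤ wt y :=
  Finset.card_le_card (filter_sub h)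

private lemma wt_eq_imp {x y : Fin n → Bool} (h : x ≤ y) (hw : wt x = wt y) : x = y := by
  have heq := Finset.eq_of_subset_of_card_le (filter_sub h) (le_of_eq hw.symm)
  funext i
  by_cases hx : x i = true
  · have hmem : i ∈ Finset.univ.filter (fun i => y i = true) :=
      heq ▸ Finset.mem_filter.mpr ⟨Finset.mem_univ i, hx⟩
    have hy := (Finset.mem_filter.mp hmem).2
    rw [hx, hy]
  · by_cases hy : y i = true
    · have hmem : i ∈ Finset.univ.filter (fun i => x i = true) :=
        heq.symm ▸ Finset.mem_filter.mpr ⟨Finset.mem_univ i, hy⟩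
      exact absurd (Finset.mem_filter.mp hmem).2 hx
    · rw [Bool.not_eq_true] at hx hy; rw [hx, hy]

end Aux

theorem extend_to_halving_upset (n : ℕ) (hn : 0 < n) (T F : Set (Fin n → Bool))
    (hT : ∀ u ∈ T, ∀ u' ∈ T, ¬ u ≤ (fun i => ! u' i))
    (hF : ∀ v ∈ F, ∀ v' ∈ F, ¬ (fun i => ! v i) ≤ v')
    (hTF : ∀ u ∈ T, ∀ v ∈ F, ¬ u ≤ v) :
    ∃ U : Set (Fin n → Bool),
      (∀ a ∈ U, ∀ b, a ≤ b → b ∈ U) ∧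
      U.ncard = 2 ^ (n - 1) ∧
      T ⊆ U ∧
      (∀ v ∈ F, (fun i => ! v i) ∈ U) ∧
      (∀ u ∈ U, (fun i => ! u i) ∉ U) := by
  classical
  -- injection into ℕ
  let e : (Fin n → Bool) → ℕ := fun x => (Fintype.equivFin (Fin n → Bool) x : ℕ)
  have he : Function.Injective e := by
    intro a b h
    exact (Fintype.equivFin (Fin n → Bool)).injective (Fin.val_injective h)
  -- strict linear order refining ≤
  let lt' : (Fin n → Bool) → (Fin n → Bool) → Prop :=
    fun a b => wt a < wt b ∨ (wt a = wt b ∧ e a < e b)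
  have lt'_trans : ∀ a b c, lt' a b → lt' b c → lt' a c := by
    intro a b c h1 h2; simp only [lt'] at *; omega
  have lt'_asymm : ∀ a b, lt' a b → ¬ lt' b a := by
    intro a b h1 h2; simp only [lt'] at *; omega
  have lt'_total : ∀ a b, a ≠ b → lt' a b ∨ lt' b a := by
    intro a b hab
    have : e a ≠ e b := fun h => hab (he h)
    simp only [lt']; omega
  have le_lt' : ∀ a b : Fin n → Bool, a ≤ b → a = b ∨ lt' a b := by
    intro a b h
    rcases lt_or_eq_of_le (wt_mono h) with hw | hw
    · exact Or.inr (Or.inl hw)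
    · exact Or.inl (wt_eq_imp h hw)
  -- the seed set
  set S : Set (Fin n → Bool) := T ∪ (bneg '' F) with hSdef
  have hS : ∀ a ∈ S, ∀ b ∈ S, ¬ a ≤ bneg b := by
    rintro a (ha | ⟨v, hv, rfl⟩) b (hb | ⟨v', hv', rfl⟩)
    · exact hT a ha b hb
    · rw [bneg_bneg]; exact hTF a ha v' hv'
    · intro h
      rw [le_bneg_comm] at h
      rw [bneg_bneg] at h
      exact hTF b hb v hv h
    · rw [bneg_bneg]; exact hF v hv v' hv'
  set upS : Set (Fin n → Bool) := {x | ∃ a ∈ S, a ≤ x} with hupSdef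
  have hup_anti : ∀ x ∈ upS, bneg x ∉ upS := by
    rintro x ⟨a, ha, hax⟩ ⟨b, hb, hbnx⟩
    have : x ≤ bneg b := by rw [← bneg_bneg x] at hbnx ⊢; exact le_bneg_comm.mp hbnx
    exact hS a ha b hb (le_trans hax this)
  set U : Set (Fin n → Bool) := upS ∪ {x | bneg x ∉ upS ∧ lt' (bneg x) x} with hUdef
  have hSU : S ⊆ U := fun a ha => Or.inl ⟨a, ha, le_refl a⟩
  -- upset
  have hUpset : ∀ a ∈ U, ∀ b, a ≤ b → b ∈ U := by
    rintro x (⟨a, ha, hax⟩ | ⟨hnx, hlt⟩) y hxy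
    · exact Or.inl ⟨a, ha, le_trans hax hxy⟩
    · by_cases hy : y ∈ upS
      · exact Or.inl hy
      · right
        refine ⟨?_, ?_⟩
        · rintro ⟨a, ha, hay⟩
          exact hnx ⟨a, ha, le_trans hay (bneg_anti hxy)⟩
        · -- bneg y ≤ bneg x, lt' (bneg x) x, x ≤ y
          have h1 := le_lt' _ _ (bneg_anti hxy)
          have h2 := le_lt' _ _ hxy
          rcases h1 with h1 | h1 <;> rcases h2 with h2 | h2
          · exact h2 ▸ hlt
          · exact lt'_trans _ _ _ (h1.symm ▸ hlt) h2
          · exact h2 ▸ hlt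
          · exact lt'_trans _ _ _ h1 (lt'_trans _ _ _ hlt h2)
  -- antipodal free
  have hFree : ∀ u ∈ U, bneg u ∉ U := by
    rintro u (hu | ⟨hnu, hlt⟩) (hnu' | ⟨hnnu, hlt'⟩)
    · exact hup_anti u hu hnu'
    · rw [bneg_bneg] at hnnu; exact hnnu hu
    · exact hnu hnu'
    · rw [bneg_bneg] at hlt'
      exact lt'_asymm _ _ hlt hlt'
  -- exactly one of x, bneg x in U
  have hOne : ∀ x, x ∉ U → bneg x ∈ U := by
    intro x hx
    have hxup : x ∉ upS := fun h => hx (Or.inl h)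
    by_cases hnx : bneg x ∈ upS
    · exact Or.inl hnx
    · have hne : x ≠ bneg x := by
        intro h
        have := congrFun h ⟨0, hn⟩
        simp [bneg] at this
      rcases lt'_total _ _ hne with h | h
      · refine Or.inr ?_
        simp only [Set.mem_setOf_eq, bneg_bneg]
        exact ⟨hxup, h⟩
      · exact absurd (Or.inr ⟨hnx, h⟩) hx
  -- cardinality
  have himg : bneg '' U = Uᶜ := by
    apply Set.eq_of_subset_of_subset
    · rintro _ ⟨u, hu, rfl⟩
      exact hFree u hu
    · intro x hx
      exact ⟨bneg x, hOne x hx, bneg_bneg x⟩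
  have hbneg_inj : Function.Injective (bneg : (Fin n → Bool) → (Fin n → Bool)) := by
    intro a b h
    rw [← bneg_bneg a, ← bneg_bneg b, h]
  have hcard : U.ncard = 2 ^ (n - 1) := by
    have h1 : (bneg '' U).ncard = U.ncard := Set.ncard_image_of_injective U hbneg_inj
    have h2 : U.ncard + Uᶜ.ncard = Fintype.card (Fin n → Bool) := by
      rw [Set.ncard_add_ncard_compl, Nat.card_eq_fintype_card]
    have h3 : Fintype.card (Fin n → Bool) = 2 ^ n := by
      simp [Fintype.card_fun]
    rw [himg] at h1
    have hpow : 2 ^ n = 2 * 2 ^ (n - 1) := by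
      conv_lhs => rw [show n = (n-1) + 1 by omega]
      ring
    omega
  refine ⟨U, hUpset, hcard, ?_, ?_, ?_⟩
  · exact fun u hu => hSU (Or.inl hu)
  · exact fun v hv => hSU (Or.inr ⟨v, hv, rfl⟩)
  · intro u hu
    exact hFree u hu
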